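/- Let X, Y, Z be random vectors, with W_X, W_Y the Moore–Penrose inverses of Var(X), Var(Y) respectively. If Cov_Y(X,Z) = 0 (adjusted orthogonality of X and Z given Y), then P_X(Z) = P_Y(Z)·P_X(Y), i.e. Cov(Z,X)·W_X = Cov(Z,Y)·W_Y·Cov(Y,X)·W_X. -/

import Mathlib

open MeasureTheory Matrix

variable {Ω : Type*}

/-- The covariance matrix of two random vectors `B` (dimension `m`) and `D` (dimension `n`):
the `(i,j)` entry is `E[Bᵢ·Dⱼ] − E[Bᵢ]·E[Dⱼ]`. -/
noncomputable def cov [MeasurableSpace Ω] (μ : Measure Ω) {m n : ℕ}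
    (B : Fin m → Ω → ℝ) (D : Fin n → Ω → ℝ) : Matrix (Fin m) (Fin n) ℝ :=
  Matrix.of fun i j =>
    (∫ ω, B i ω * D j ω ∂μ) - (∫ ω, B i ω ∂μ) * (∫ ω, D j ω ∂μ)

/-- `W` is a Moore–Penrose inverse of `V`. -/
def IsMoorePenrose {m n : ℕ} (V : Matrix (Fin m) (Fin n) ℝ)
    (W : Matrix (Fin n) (Fin m) ℝ) : Prop :=
  V * W * V = V ∧ W * V * W = W ∧ (V * W)ᵀ = V * W ∧ (W * V)ᵀ = W * V

/-- The adjusted expectation `E_D(B)` (computed with the matrix `W`, intended to be the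
Moore–Penrose inverse of `Var(D)`): the `i`-th component is
`E[Bᵢ] + Σ_j (Cov(B,D)·W)_{ij}·(Dⱼ − E[Dⱼ])`. -/
noncomputable def adjExp [MeasurableSpace Ω] (μ : Measure Ω) {m n : ℕ}
    (B : Fin m → Ω → ℝ) (D : Fin n → Ω → ℝ)
    (W : Matrix (Fin n) (Fin n) ℝ) : Fin m → Ω → ℝ :=
  fun i ω => (∫ ω', B i ω' ∂μ) + ∑ j, (cov μ B D * W) i j * (D j ω - ∫ ω', D j ω' ∂μ)

/-- The adjusted covariance `Cov_D(B,C) = Cov(B − E_D(B), C − E_D(C))`. -/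
noncomputable def adjCov [MeasurableSpace Ω] (μ : Measure Ω) {m p n : ℕ}
    (B : Fin m → Ω → ℝ) (C : Fin p → Ω → ℝ) (D : Fin n → Ω → ℝ)
    (W : Matrix (Fin n) (Fin n) ℝ) : Matrix (Fin m) (Fin p) ℝ :=
  cov μ (fun i ω => B i ω - adjExp μ B D W i ω) (fun j ω => C j ω - adjExp μ C D W j ω)

section Aux

variable [MeasurableSpace Ω] {μ : Measure Ω} [IsProbabilityMeasure μ]

omit [IsProbabilityMeasure μ] in
lemma mulInt {f g : Ω → ℝ} (hf : MemLp f 2 μ) (hg : MemLp g 2 μ) :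
    Integrable (fun ω => f ω * g ω) μ := by
  rw [← memLp_one_iff_integrable]
  have := hg.smul (φ := f) hf (r := 1)
  exact this

lemma int_centered {f : Ω → ℝ} (hf : MemLp f 2 μ) :
    ∫ ω, (f ω - ∫ ω', f ω' ∂μ) ∂μ = 0 := by
  rw [integral_sub (hf.integrable one_le_two) (integrable_const _)]
  simp

lemma memLp_centered {f : Ω → ℝ} (hf : MemLp f 2 μ) :
    MemLp (fun ω => f ω - ∫ ω', f ω' ∂μ) 2 μ :=
  hf.sub (memLp_const _)

/-- Covariance entry as integral of centered product. -/
lemma cent {f g : Ω → ℝ} (hf : MemLp f 2 μ) (hg : MemLp g 2 μ) :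
    ∫ ω, (f ω - ∫ ω', f ω' ∂μ) * (g ω - ∫ ω', g ω' ∂μ) ∂μ
      = (∫ ω, f ω * g ω ∂μ) - (∫ ω, f ω ∂μ) * (∫ ω, g ω ∂μ) := by
  have hfi := hf.integrable one_le_two
  have hgi := hg.integrable one_le_two
  have h1 : Integrable (fun ω => f ω * g ω) μ := mulInt hf hg
  set a := ∫ ω', f ω' ∂μ with ha
  set b := ∫ ω', g ω' ∂μ with hb
  have e : (fun ω => (f ω - a) * (g ω - b))
      = fun ω => f ω * g ω - a * g ω - b * f ω + a * b := by
    funext ω; ring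
  have i2 : Integrable (fun ω => a * g ω) μ := hgi.const_mul a
  have i3 : Integrable (fun ω => b * f ω) μ := hfi.const_mul b
  have i12 : Integrable (fun ω => f ω * g ω - a * g ω) μ := h1.sub i2
  have i123 : Integrable (fun ω => f ω * g ω - a * g ω - b * f ω) μ := i12.sub i3
  rw [e, integral_add i123 (integrable_const (a * b)), integral_sub i12 i3,
    integral_sub h1 i2, integral_const_mul, integral_const_mul, integral_const,
    ← ha, ← hb]
  simp only [measure_univ, probReal_univ, ENNReal.toReal_one, smul_eq_mul, one_mul]
  ring

lemma adjCov_eq {m p n : ℕ} (B : Fin m → Ω → ℝ) (C : Fin p → Ω → ℝ) (D : Fin n → Ω → ℝ)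
    (hB : ∀ i, MemLp (B i) 2 μ) (hC : ∀ i, MemLp (C i) 2 μ) (hD : ∀ i, MemLp (D i) 2 μ)
    (W : Matrix (Fin n) (Fin n) ℝ) :
    adjCov μ B C D W =
      cov μ B C - (cov μ B D * W) * cov μ D C - cov μ B D * (cov μ C D * W)ᵀ
        + (cov μ B D * W) * cov μ D D * (cov μ C D * W)ᵀ := by
  classical
  set A := cov μ B D * W with hA
  set K := cov μ C D * W with hK
  set D' : Fin n → Ω → ℝ := fun j ω => D j ω - ∫ ω', D j ω' ∂μ with hD'def
  set B' : Fin m → Ω → ℝ := fun i ω => B i ω - ∫ ω', B i ω' ∂μ with hB'def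
  set C' : Fin p → Ω → ℝ := fun k ω => C k ω - ∫ ω', C k ω' ∂μ with hC'def
  have hD' : ∀ j, MemLp (D' j) 2 μ := fun j => memLp_centered (hD j)
  have hB' : ∀ i, MemLp (B' i) 2 μ := fun i => memLp_centered (hB i)
  have hC' : ∀ k, MemLp (C' k) 2 μ := fun k => memLp_centered (hC k)
  have hED' : ∀ j, ∫ ω, D' j ω ∂μ = 0 := fun j => int_centered (hD j)
  have hiD' : ∀ j, Integrable (D' j) μ := fun j => (hD' j).integrable one_le_two
  have covBC : ∀ i k, cov μ B C i k = ∫ ω, B' i ω * C' k ω ∂μ := fun i k =>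
    (cent (hB i) (hC k)).symm
  have covBD : ∀ i j, cov μ B D i j = ∫ ω, B' i ω * D' j ω ∂μ := fun i j =>
    (cent (hB i) (hD j)).symm
  have covDC : ∀ j k, cov μ D C j k = ∫ ω, D' j ω * C' k ω ∂μ := fun j k =>
    (cent (hD j) (hC k)).symm
  have covDD : ∀ j l, cov μ D D j l = ∫ ω, D' j ω * D' l ω ∂μ := fun j l =>
    (cent (hD j) (hD l)).symm
  ext i k
  have hf' : ∀ ω, B i ω - adjExp μ B D W i ω = B' i ω - ∑ j, A i j * D' j ω := by
    intro ω; simp only [adjExp, hB'def, hD'def, ← hA]; ring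
  have hg' : ∀ ω, C k ω - adjExp μ C D W k ω = C' k ω - ∑ j, K k j * D' j ω := by
    intro ω; simp only [adjExp, hC'def, hD'def, ← hK]; ring
  have hsB : MemLp (fun ω => ∑ j, A i j * D' j ω) 2 μ :=
    memLp_finset_sum Finset.univ fun j _ => (hD' j).const_mul (A i j)
  have hsC : MemLp (fun ω => ∑ j, K k j * D' j ω) 2 μ :=
    memLp_finset_sum Finset.univ fun j _ => (hD' j).const_mul (K k j)
  have hintsum : ∀ (E : Fin n → ℝ), ∫ ω, (∑ j, E j * D' j ω) ∂μ = 0 := by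
    intro E
    rw [integral_finset_sum _ (fun j _ => (hiD' j).const_mul (E j))]
    simp [integral_const_mul, hED']
  have hEf : ∫ ω, (B' i ω - ∑ j, A i j * D' j ω) ∂μ = 0 := by
    rw [integral_sub ((hB' i).integrable one_le_two)
      (integrable_finset_sum _ (fun j _ => (hiD' j).const_mul (A i j)))]
    rw [hintsum (A i), int_centered (hB i), sub_zero]
  have hEg : ∫ ω, (C' k ω - ∑ j, K k j * D' j ω) ∂μ = 0 := by
    rw [integral_sub ((hC' k).integrable one_le_two)
      (integrable_finset_sum _ (fun j _ => (hiD' j).const_mul (K k j)))]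
    rw [hintsum (K k), int_centered (hC k), sub_zero]
  have I1 : Integrable (fun ω => B' i ω * C' k ω) μ := mulInt (hB' i) (hC' k)
  have I2 : Integrable (fun ω => B' i ω * ∑ j, K k j * D' j ω) μ := mulInt (hB' i) hsC
  have I3 : Integrable (fun ω => (∑ j, A i j * D' j ω) * C' k ω) μ := mulInt hsB (hC' k)
  have I4 : Integrable (fun ω => (∑ j, A i j * D' j ω) * ∑ j, K k j * D' j ω) μ :=
    mulInt hsB hsC
  have J2 : ∫ ω, B' i ω * ∑ j, K k j * D' j ω ∂μ = ∑ j, K k j * cov μ B D i j := by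
    have e : (fun ω => B' i ω * ∑ j, K k j * D' j ω)
        = fun ω => ∑ j, K k j * (B' i ω * D' j ω) := by
      funext ω; rw [Finset.mul_sum]; exact Finset.sum_congr rfl fun j _ => by ring
    rw [e, integral_finset_sum _ (fun j _ => (mulInt (hB' i) (hD' j)).const_mul _)]
    exact Finset.sum_congr rfl fun j _ => by rw [integral_const_mul, covBD]
  have J3 : ∫ ω, (∑ j, A i j * D' j ω) * C' k ω ∂μ = ∑ j, A i j * cov μ D C j k := by
    have e : (fun ω => (∑ j, A i j * D' j ω) * C' k ω)
        = fun ω => ∑ j, A i j * (D' j ω * C' k ω) := by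
      funext ω; rw [Finset.sum_mul]; exact Finset.sum_congr rfl fun j _ => by ring
    rw [e, integral_finset_sum _ (fun j _ => (mulInt (hD' j) (hC' k)).const_mul _)]
    exact Finset.sum_congr rfl fun j _ => by rw [integral_const_mul, covDC]
  have J4 : ∫ ω, (∑ j, A i j * D' j ω) * ∑ j, K k j * D' j ω ∂μ
      = ∑ j, ∑ l, A i j * (cov μ D D j l * K k l) := by
    have e : (fun ω => (∑ j, A i j * D' j ω) * ∑ j, K k j * D' j ω)
        = fun ω => ∑ j, ∑ l, (A i j * K k l) * (D' j ω * D' l ω) := by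
      funext ω
      rw [Finset.sum_mul]
      refine Finset.sum_congr rfl fun j _ => ?_
      rw [Finset.mul_sum]
      exact Finset.sum_congr rfl fun l _ => by ring
    rw [e, integral_finset_sum _ (fun j _ => integrable_finset_sum _
      (fun l _ => (mulInt (hD' j) (hD' l)).const_mul _))]
    refine Finset.sum_congr rfl fun j _ => ?_
    rw [integral_finset_sum _ (fun l _ => (mulInt (hD' j) (hD' l)).const_mul _)]
    exact Finset.sum_congr rfl fun l _ => by rw [integral_const_mul, covDD]; ring
  have lhs : adjCov μ B C D W i k
      = ∫ ω, (B' i ω - ∑ j, A i j * D' j ω) * (C' k ω - ∑ j, K k j * D' j ω) ∂μ := by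
    simp only [adjCov, cov, Matrix.of_apply, hf', hg', hEf, hEg, mul_zero, sub_zero]
  rw [lhs]
  have e : (fun ω => (B' i ω - ∑ j, A i j * D' j ω) * (C' k ω - ∑ j, K k j * D' j ω))
      = fun ω => B' i ω * C' k ω - B' i ω * (∑ j, K k j * D' j ω)
          - (∑ j, A i j * D' j ω) * C' k ω
          + (∑ j, A i j * D' j ω) * (∑ j, K k j * D' j ω) := by
    funext ω; ring
  have I12 : Integrable (fun ω => B' i ω * C' k ω
      - B' i ω * ∑ j, K k j * D' j ω) μ := I1.sub I2
  have I123 : Integrable (fun ω => B' i ω * C' k ω - B' i ω * (∑ j, K k j * D' j ω)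
      - (∑ j, A i j * D' j ω) * C' k ω) μ := I12.sub I3
  rw [e, integral_add I123 I4, integral_sub I12 I3, integral_sub I1 I2, J2, J3, J4,
    ← covBC i k]
  have s2 : (∑ j, K k j * cov μ B D i j) = ∑ j, cov μ B D i j * K k j :=
    Finset.sum_congr rfl fun j _ => mul_comm _ _
  have s4 : (∑ j, ∑ l, A i j * (cov μ D D j l * K k l))
      = ∑ l, (∑ j, A i j * cov μ D D j l) * K k l := by
    rw [Finset.sum_comm]
    refine Finset.sum_congr rfl fun l _ => ?_
    rw [Finset.sum_mul]
    exact Finset.sum_congr rfl fun j _ => by ring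
  rw [s2, s4]
  simp only [Matrix.add_apply, Matrix.sub_apply, Matrix.mul_apply, Matrix.transpose_apply]
  ring

end Aux

lemma cov_transpose [MeasurableSpace Ω] (μ : Measure Ω) {m n : ℕ}
    (B : Fin m → Ω → ℝ) (D : Fin n → Ω → ℝ) : (cov μ B D)ᵀ = cov μ D B := by
  ext i j
  simp [cov, mul_comm]

lemma mp_unique {n : ℕ} {V W W' : Matrix (Fin n) (Fin n) ℝ}
    (h : IsMoorePenrose V W) (h' : IsMoorePenrose V W') : W = W' := by
  obtain ⟨h1, h2, h3, h4⟩ := h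
  obtain ⟨h1', h2', h3', h4'⟩ := h'
  have e1 : V * W = V * W' := by
    have ha : V * W * (V * W') = V * W' := by rw [← Matrix.mul_assoc, h1]
    have hb : V * W * (V * W') = V * W := by
      calc V * W * (V * W') = (V * W)ᵀ * (V * W')ᵀ := by rw [h3, h3']
        _ = Wᵀ * Vᵀ * (W'ᵀ * Vᵀ) := by rw [Matrix.transpose_mul, Matrix.transpose_mul]
        _ = Wᵀ * (Vᵀ * (W'ᵀ * Vᵀ)) := by rw [Matrix.mul_assoc]
        _ = Wᵀ * (V * W' * V)ᵀ := by
              rw [Matrix.transpose_mul (V * W') V, Matrix.transpose_mul V W']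
        _ = Wᵀ * Vᵀ := by rw [h1']
        _ = (V * W)ᵀ := (Matrix.transpose_mul V W).symm
        _ = V * W := h3
    rw [← hb, ha]
  have e2 : W * V = W' * V := by
    have ha : W' * V * (W * V) = W' * V := by
      rw [Matrix.mul_assoc, ← Matrix.mul_assoc V W V, h1]
    have hb : W' * V * (W * V) = W * V := by
      calc W' * V * (W * V) = (W' * V)ᵀ * (W * V)ᵀ := by rw [h4, h4']
        _ = Vᵀ * W'ᵀ * (Vᵀ * Wᵀ) := by rw [Matrix.transpose_mul, Matrix.transpose_mul]
        _ = Vᵀ * W'ᵀ * Vᵀ * Wᵀ := by rw [← Matrix.mul_assoc]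
        _ = (V * W' * V)ᵀ * Wᵀ := by
              rw [Matrix.transpose_mul (V * W') V, Matrix.transpose_mul V W',
                ← Matrix.mul_assoc]
        _ = Vᵀ * Wᵀ := by rw [h1']
        _ = (W * V)ᵀ := (Matrix.transpose_mul W V).symm
        _ = W * V := h4
    rw [← hb, ha]
  calc W = W * V * W := h2.symm
    _ = W' * V * W := by rw [e2]
    _ = W' * (V * W') := by rw [Matrix.mul_assoc, e1]
    _ = W' := by rw [← Matrix.mul_assoc, h2']

lemma mp_transpose_self {n : ℕ} {V W : Matrix (Fin n) (Fin n) ℝ}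
    (hV : Vᵀ = V) (h : IsMoorePenrose V W) : Wᵀ = W := by
  obtain ⟨h1, h2, h3, h4⟩ := h
  refine mp_unique (V := V) ?_ ⟨h1, h2, h3, h4⟩
  refine ⟨?_, ?_, ?_, ?_⟩
  · calc V * Wᵀ * V = Vᵀ * Wᵀ * Vᵀ := by rw [hV]
      _ = (V * W * V)ᵀ := by
            rw [Matrix.transpose_mul (V * W) V, Matrix.transpose_mul V W,
              ← Matrix.mul_assoc]
      _ = Vᵀ := by rw [h1]
      _ = V := hV
  · calc Wᵀ * V * Wᵀ = Wᵀ * Vᵀ * Wᵀ := by rw [hV]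
      _ = (W * V * W)ᵀ := by
            rw [Matrix.transpose_mul (W * V) W, Matrix.transpose_mul W V,
              ← Matrix.mul_assoc]
      _ = Wᵀ := by rw [h2]
  · calc (V * Wᵀ)ᵀ = W * V := by
          rw [Matrix.transpose_mul, Matrix.transpose_transpose, hV]
      _ = (W * V)ᵀ := h4.symm
      _ = Vᵀ * Wᵀ := by rw [Matrix.transpose_mul]
      _ = V * Wᵀ := by rw [hV]
  · calc (Wᵀ * V)ᵀ = V * W := by
          rw [Matrix.transpose_mul, Matrix.transpose_transpose, hV]
      _ = (V * W)ᵀ := h3.symm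
      _ = Wᵀ * Vᵀ := by rw [Matrix.transpose_mul]
      _ = Wᵀ * V := by rw [hV]

/-- Theorem 1, eq. (14) of the paper: if `Cov_Y(X,Z) = 0` then
`P_X(Z) = P_Y(Z)·P_X(Y)`, i.e. `Cov(Z,X)·W_X = Cov(Z,Y)·W_Y·Cov(Y,X)·W_X`. -/
theorem proj_comp_of_adjOrth [MeasurableSpace Ω] (μ : Measure Ω) [IsProbabilityMeasure μ]
    {mx my mz : ℕ} (X : Fin mx → Ω → ℝ) (Y : Fin my → Ω → ℝ) (Z : Fin mz → Ω → ℝ)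
    (hX : ∀ i, Measurable (X i) ∧ MemLp (X i) 2 μ)
    (hY : ∀ i, Measurable (Y i) ∧ MemLp (Y i) 2 μ)
    (hZ : ∀ i, Measurable (Z i) ∧ MemLp (Z i) 2 μ)
    (WX : Matrix (Fin mx) (Fin mx) ℝ) (hWX : IsMoorePenrose (cov μ X X) WX)
    (WY : Matrix (Fin my) (Fin my) ℝ) (hWY : IsMoorePenrose (cov μ Y Y) WY)
    (horth : adjCov μ X Z Y WY = 0) :
    cov μ Z X * WX = cov μ Z Y * WY * cov μ Y X * WX := by
  have hVsym : (cov μ Y Y)ᵀ = cov μ Y Y := cov_transpose μ Y Y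
  have hWsym : WYᵀ = WY := mp_transpose_self hVsym hWY
  have hexp := adjCov_eq X Z Y (fun i => (hX i).2) (fun i => (hZ i).2) (fun i => (hY i).2) WY
  rw [horth] at hexp
  have hKT : (cov μ Z Y * WY)ᵀ = WY * cov μ Y Z := by
    rw [Matrix.transpose_mul, hWsym, cov_transpose]
  rw [hKT] at hexp
  have h4 : cov μ X Y * WY * cov μ Y Y * (WY * cov μ Y Z)
      = cov μ X Y * WY * cov μ Y Z := by
    calc cov μ X Y * WY * cov μ Y Y * (WY * cov μ Y Z)
        = cov μ X Y * (WY * cov μ Y Y * WY) * cov μ Y Z := by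
          simp only [Matrix.mul_assoc]
      _ = cov μ X Y * WY * cov μ Y Z := by rw [hWY.2.1, Matrix.mul_assoc]
  have h3 : cov μ X Y * (WY * cov μ Y Z) = cov μ X Y * WY * cov μ Y Z := by
    rw [Matrix.mul_assoc]
  rw [h3, h4] at hexp
  have h0 := hexp.symm
  rw [sub_add_cancel, sub_eq_zero] at h0
  have hZX : cov μ Z X = cov μ Z Y * WY * cov μ Y X := by
    calc cov μ Z X = (cov μ X Z)ᵀ := (cov_transpose μ X Z).symm
      _ = (cov μ X Y * WY * cov μ Y Z)ᵀ := by rw [h0]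
      _ = (cov μ Y Z)ᵀ * (cov μ X Y * WY)ᵀ := by rw [Matrix.transpose_mul]
      _ = (cov μ Y Z)ᵀ * (WYᵀ * (cov μ X Y)ᵀ) := by rw [Matrix.transpose_mul]
      _ = cov μ Z Y * (WY * cov μ Y X) := by rw [hWsym, cov_transpose, cov_transpose]
      _ = cov μ Z Y * WY * cov μ Y X := by rw [Matrix.mul_assoc]
  rw [hZX]
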